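/- For integers n ≥ 1 and 0 ≤ k ≤ n, and an indeterminate t, the identity (n!/(n−k)!) · Σ_{l=0}^{n−k} (−1)^{n−k−l} binom(n−k,l) binom(l+t,n) = binom(n,k) · t(t−1)···(t−(k−1)) holds as an identity of polynomials in t. -/
import Mathlib
open Polynomial Finset

lemma diff_lemma (n : ℕ) :
    (descPochhammer ℚ (n+1)).comp (X + 1) =
      descPochhammer ℚ (n+1) + ((n:ℚ)+1) • descPochhammer ℚ n := by
  conv_lhs => rw [descPochhammer_succ_left]
  conv_rhs => rw [descPochhammer_succ_right]
  rw [mul_comp, X_comp, comp_assoc, sub_comp, X_comp, one_comp, add_sub_cancel_right, comp_X]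
  rw [smul_eq_C_mul]
  simp only [map_add, C_1, C_eq_natCast]
  ring

lemma alt_sum (m : ℕ) (q : ℕ → ℚ[X]) :
    ∑ l ∈ Finset.range (m+2), ((-1:ℚ)^(m+1+l) * (((m+1).choose l) : ℚ)) • q l
    = ∑ l ∈ Finset.range (m+1), ((-1:ℚ)^(m+l) * ((m.choose l) : ℚ)) • (q (l+1) - q l) := by
  rw [Finset.sum_range_succ']
  have h1 : ∀ l ∈ Finset.range (m+1),
      ((-1:ℚ)^(m+1+(l+1)) * (((m+1).choose (l+1)) : ℚ)) • q (l+1)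
      = ((-1:ℚ)^(m+l) * ((m.choose l):ℚ)) • q (l+1)
        + ((-1:ℚ)^(m+l) * ((m.choose (l+1)):ℚ)) • q (l+1) := by
    intro l _
    rw [Nat.choose_succ_succ]
    push_cast
    rw [← add_smul]
    congr 1
    ring
  rw [Finset.sum_congr rfl h1, Finset.sum_add_distrib]
  simp only [smul_sub]
  conv_rhs => rw [Finset.sum_sub_distrib]
  have h2 : ∑ l ∈ Finset.range (m+1), ((-1:ℚ)^(m+l) * ((m.choose (l+1)):ℚ)) • q (l+1)
      + ((-1:ℚ)^(m+1+0) * (((m+1).choose 0):ℚ)) • q 0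
      = - ∑ l ∈ Finset.range (m+1), ((-1:ℚ)^(m+l) * ((m.choose l):ℚ)) • q l := by
    rw [Finset.sum_range_succ]
    conv_rhs => rw [← Finset.sum_neg_distrib, Finset.sum_range_succ']
    rw [Nat.choose_succ_self]
    simp only [Nat.cast_zero, mul_zero, zero_smul, add_zero, Nat.choose_zero_right,
      Nat.cast_one, mul_one, ← neg_smul]
    congr 1
    · apply Finset.sum_congr rfl
      intro l _
      congr 1
      ring
    · congr 1
      ring
  rw [add_assoc, h2]
  abel

lemma main_lemma : ∀ (m n : ℕ), m ≤ n →
    ∑ l ∈ Finset.range (m + 1),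
        ((-1 : ℚ) ^ (m + l) * (m.choose l : ℚ)) •
          (descPochhammer ℚ n).comp (X + Polynomial.C (l : ℚ))
    = ((n.factorial : ℚ) / ((n - m).factorial : ℚ)) • descPochhammer ℚ (n - m) := by
  intro m
  induction m with
  | zero =>
    intro n hn
    simp [div_self (by positivity : (n.factorial : ℚ) ≠ 0)]
  | succ m ih =>
    intro n hmn
    obtain ⟨n, rfl⟩ : ∃ n', n = n' + 1 := ⟨n - 1, by omega⟩
    have hmn' : m ≤ n := by omega
    rw [show m + 1 + 1 = m + 2 from rfl,
      alt_sum m (fun l => (descPochhammer ℚ (n+1)).comp (X + Polynomial.C (l : ℚ)))]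
    have hterm : ∀ l : ℕ,
        ((descPochhammer ℚ (n+1)).comp (X + Polynomial.C ((l+1 : ℕ) : ℚ))
          - (descPochhammer ℚ (n+1)).comp (X + Polynomial.C (l : ℚ)))
        = ((n:ℚ)+1) • (descPochhammer ℚ n).comp (X + Polynomial.C (l : ℚ)) := by
      intro l
      have : (X + Polynomial.C ((l+1 : ℕ) : ℚ)) = (X + 1).comp (X + Polynomial.C (l : ℚ)) := by
        push_cast
        simp [add_comp]
        ring
      rw [this, ← comp_assoc, diff_lemma]
      rw [add_comp, smul_comp, add_sub_cancel_left]
    simp only [hterm]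
    have hswap : ∀ l : ℕ, ((-1:ℚ)^(m+l) * ((m.choose l):ℚ)) • (((n:ℚ)+1) •
        (descPochhammer ℚ n).comp (X + Polynomial.C (l : ℚ)))
        = ((n:ℚ)+1) • (((-1:ℚ)^(m+l) * ((m.choose l):ℚ)) •
        (descPochhammer ℚ n).comp (X + Polynomial.C (l : ℚ))) := by
      intro l
      rw [smul_smul, smul_smul]
      ring_nf
    simp only [hswap]
    rw [← Finset.smul_sum, ih n hmn', smul_smul]
    have h1 : n + 1 - (m + 1) = n - m := by omega
    rw [h1]
    congr 1
    have h2 : (n+1).factorial = (n+1) * n.factorial := rfl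
    rw [h2]
    push_cast
    ring

theorem stmt3 (n k : ℕ) (hn : 1 ≤ n) (hk : k ≤ n) :
    Polynomial.C ((n.factorial : ℚ) / ((n - k).factorial : ℚ)) *
      ∑ l ∈ Finset.range (n - k + 1),
        Polynomial.C ((-1 : ℚ) ^ (n - k - l) * ((n - k).choose l : ℚ) / (n.factorial : ℚ)) *
          (descPochhammer ℚ n).comp (Polynomial.X + Polynomial.C (l : ℚ))
    = Polynomial.C (n.choose k : ℚ) * descPochhammer ℚ k := by
  have hml : ∀ l ∈ Finset.range (n-k+1),
      Polynomial.C ((-1:ℚ)^(n-k-l) * (((n-k).choose l) : ℚ) / (n.factorial : ℚ)) *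
        (descPochhammer ℚ n).comp (X + Polynomial.C (l:ℚ))
      = ((1:ℚ)/(n.factorial : ℚ)) • (((-1:ℚ)^(n-k+l) * (((n-k).choose l) : ℚ)) •
        (descPochhammer ℚ n).comp (X + Polynomial.C (l:ℚ))) := by
    intro l hl
    rw [smul_smul, smul_eq_C_mul]
    congr 2
    have hl' : l ≤ n - k := by
      have := Finset.mem_range.mp hl; omega
    have hsg : (-1:ℚ)^(n-k-l) = (-1:ℚ)^(n-k+l) := by
      rw [show n-k+l = (n-k-l) + 2*l by omega, pow_add, pow_mul]
      norm_num
    rw [hsg]; ring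
  rw [Finset.sum_congr rfl hml, ← Finset.smul_sum, main_lemma (n-k) n (by omega)]
  have hnk : n - (n - k) = k := by omega
  rw [hnk, smul_smul, smul_eq_C_mul, ← mul_assoc, ← Polynomial.C_mul]
  congr 2
  rw [Nat.cast_choose ℚ hk]
  have h1 : (n.factorial : ℚ) ≠ 0 := by positivity
  have h2 : ((n-k).factorial : ℚ) ≠ 0 := by positivity
  have h3 : (k.factorial : ℚ) ≠ 0 := by positivity
  rw [div_mul_div_comm, one_mul, div_mul_div_comm]
  rw [div_eq_div_iff (by positivity) (by positivity)]
  ring
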